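/- Let n ≥ 5, let Λ₀ = {x ∈ ℤⁿ : Σxᵢ = 0}, and let the alternating group A_n act on Λ₀ by permuting coordinates. If φ is a group homomorphism from Λ₀ ⋊ A_n to a group L that is trivial on A_n, then φ is trivial on Λ₀ as well. -/

import Mathlib

/-- The subgroup `Λ₀` of `ℤⁿ` consisting of tuples whose coordinates sum to zero. -/
def sumZero (n : ℕ) : AddSubgroup (Fin n → ℤ) where
  carrier := {x | ∑ i, x i = 0}
  add_mem' := by
    intro a b ha hb
    simp only [Set.mem_setOf_eq, Pi.add_apply, Finset.sum_add_distrib] at *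
    rw [ha, hb, add_zero]
  zero_mem' := by simp
  neg_mem' := by
    intro a ha
    simp only [Set.mem_setOf_eq, Pi.neg_apply, Finset.sum_neg_distrib] at *
    rw [ha, neg_zero]

/-- The multiplicative group structure on `AddAut` used by older Mathlib (composition). -/
instance addAutMulGroupOld (A : Type*) [Add A] : Group (AddAut A) where
  mul g h := AddEquiv.trans h g
  one := AddEquiv.refl _
  inv := AddEquiv.symm
  mul_assoc _ _ _ := rfl
  one_mul _ := rfl
  mul_one _ := rfl
  inv_mul_cancel := AddEquiv.self_trans_symm

/-- The action of permutations on `Λ₀` by permuting coordinates. -/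
def permAddAut (n : ℕ) : Equiv.Perm (Fin n) →* AddAut (sumZero n) where
  toFun σ :=
    { toFun := fun x => ⟨x.1 ∘ σ.symm, by
        have := x.2
        change ∑ i, (x.1 ∘ σ.symm) i = 0
        simpa [Function.comp] using (Equiv.sum_comp σ.symm x.1).trans this⟩
      invFun := fun x => ⟨x.1 ∘ σ, by
        have := x.2
        change ∑ i, (x.1 ∘ σ) i = 0
        simpa [Function.comp] using (Equiv.sum_comp σ x.1).trans this⟩
      left_inv := fun x => by
        ext i
        simp
      right_inv := fun x => by
        ext i
        simp
      map_add' := fun x y => rfl }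
  map_one' := by
    ext x i
    rfl
  map_mul' σ τ := by
    ext x i
    rfl

/-- The action of the alternating group on `Multiplicative Λ₀` by permuting coordinates. -/
def altAct (n : ℕ) : alternatingGroup (Fin n) →* MulAut (Multiplicative (sumZero n)) where
  toFun σ :=
    { toFun := fun x => Multiplicative.ofAdd (permAddAut n σ.1 x.toAdd)
      invFun := fun x => Multiplicative.ofAdd (permAddAut n σ.1⁻¹ x.toAdd)
      left_inv := fun x => by
        apply Multiplicative.toAdd.injective; ext i; simp [permAddAut, Equiv.Perm.inv_def]
      right_inv := fun x => by
        apply Multiplicative.toAdd.injective; ext i; simp [permAddAut, Equiv.Perm.inv_def]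
      map_mul' := fun x y => by
        show Multiplicative.ofAdd (permAddAut n σ.1 (x * y).toAdd) = _
        rw [show (x * y).toAdd = x.toAdd + y.toAdd from rfl, map_add, ofAdd_add] }
  map_one' := by
    refine MulEquiv.ext fun x => ?_
    show Multiplicative.ofAdd (permAddAut n (1 : Equiv.Perm (Fin n)) x.toAdd) = x
    rfl
  map_mul' σ τ := by
    refine MulEquiv.ext fun x => ?_
    show Multiplicative.ofAdd (permAddAut n (σ.1 * τ.1) x.toAdd) = _
    rw [map_mul]
    rfl

/-- The semidirect product `Λ₀ ⋊ Aₙ`. -/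
abbrev LamSemidirect (n : ℕ) :=
  Multiplicative (sumZero n) ⋊[altAct n] alternatingGroup (Fin n)



/-- The basis difference vector `e_i - e_j` in `Λ₀`. -/
def eij (n : ℕ) (i j : Fin n) : sumZero n :=
  ⟨(Pi.single i 1 - Pi.single j 1 : Fin n → ℤ), by
    show ∑ m, (Pi.single i 1 - Pi.single j 1 : Fin n → ℤ) m = 0
    simp [Pi.single_apply, Finset.sum_sub_distrib]⟩

lemma perm_eij (n : ℕ) (σ : Equiv.Perm (Fin n)) (i j k l : Fin n)
    (hik : σ i = k) (hjl : σ j = l) :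
    permAddAut n σ (eij n i j) = eij n k l := by
  subst hik hjl
  apply Subtype.ext
  funext m
  show (Pi.single i 1 - Pi.single j 1 : Fin n → ℤ) (σ.symm m) = (Pi.single (σ i) 1 - Pi.single (σ j) 1 : Fin n → ℤ) m
  simp [Pi.single_apply, Equiv.symm_apply_eq]

lemma exists_even_perm (n : ℕ) (hn : 5 ≤ n) (i j k l : Fin n) (hij : i ≠ j) (hkl : k ≠ l) :
    ∃ σ : Equiv.Perm (Fin n), σ ∈ alternatingGroup (Fin n) ∧ σ i = k ∧ σ j = l := by
  set σ₁ := Equiv.swap i k with hσ₁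
  set j' := σ₁ j with hj'
  have hkj' : k ≠ j' := by
    have : σ₁ i = k := Equiv.swap_apply_left i k
    intro h
    exact hij (σ₁.injective (this.trans (h.trans hj'.symm ▸ rfl)) )
  set σ₀ := Equiv.swap j' l * σ₁ with hσ₀
  have h0i : σ₀ i = k := by
    show Equiv.swap j' l (σ₁ i) = k
    rw [Equiv.swap_apply_left]
    exact Equiv.swap_apply_of_ne_of_ne hkj' hkl
  have h0j : σ₀ j = l := by
    show Equiv.swap j' l (σ₁ j) = l
    rw [← hj', Equiv.swap_apply_left]
  -- pick two points outside {i, j}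
  obtain ⟨p, hp, q, hq, hpq⟩ :
      ∃ p ∈ Finset.univ \ {i, j}, ∃ q ∈ Finset.univ \ {i, j}, p ≠ q := by
    apply Finset.one_lt_card.mp
    have hcard : (Finset.univ \ ({i, j} : Finset (Fin n))).card
        = n - ({i, j} : Finset (Fin n)).card := by
      rw [Finset.card_sdiff_of_subset (Finset.subset_univ _), Finset.card_univ, Fintype.card_fin]
    have h2 : ({i, j} : Finset (Fin n)).card ≤ 2 := Finset.card_insert_le _ _ |>.trans (by simp)
    omega
  simp only [Finset.mem_sdiff, Finset.mem_insert, Finset.mem_singleton, not_or] at hp hq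
  rcases Int.units_eq_one_or (Equiv.Perm.sign σ₀) with hs | hs
  · exact ⟨σ₀, Equiv.Perm.mem_alternatingGroup.mpr hs, h0i, h0j⟩
  · refine ⟨σ₀ * Equiv.swap p q, Equiv.Perm.mem_alternatingGroup.mpr ?_, ?_, ?_⟩
    · rw [map_mul, hs, Equiv.Perm.sign_swap hpq]; simp
    · show σ₀ (Equiv.swap p q i) = k
      rw [Equiv.swap_apply_of_ne_of_ne (fun h => hp.2.1 h.symm) (fun h => hq.2.1 h.symm), h0i]
    · show σ₀ (Equiv.swap p q j) = l
      rw [Equiv.swap_apply_of_ne_of_ne (fun h => hp.2.2 h.symm) (fun h => hq.2.2 h.symm), h0j]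

lemma sum_rep (n : ℕ) (hn : 0 < n) (v : sumZero n) :
    v = ∑ i, (v.1 i) • eij n i ⟨0, hn⟩ := by
  apply Subtype.ext
  have hcoe : ((∑ i, (v.1 i) • eij n i ⟨0, hn⟩ : sumZero n) : Fin n → ℤ)
      = ∑ i, (v.1 i) • ((eij n i ⟨0, hn⟩ : sumZero n) : Fin n → ℤ) := by
    push_cast
    rfl
  rw [hcoe]
  funext m
  simp only [Finset.sum_apply, Pi.smul_apply, eij, Pi.sub_apply, Pi.single_apply, smul_eq_mul,
    mul_sub, Finset.sum_sub_distrib, mul_ite, mul_one, mul_zero]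
  rw [Finset.sum_ite_eq Finset.univ m v.1]
  by_cases hm : m = (⟨0, hn⟩ : Fin n)
  · have h0 : ∑ x, v.1 x = 0 := v.2
    simp [hm, h0]
  · simp [hm]

lemma eij_add (n : ℕ) (i j k : Fin n) : eij n i j + eij n j k = eij n i k := by
  apply Subtype.ext
  show (Pi.single i 1 - Pi.single j 1 : Fin n → ℤ) + (Pi.single j 1 - Pi.single k 1) =
    (Pi.single i 1 - Pi.single k 1 : Fin n → ℤ)
  abel

/-- For `n ≥ 5`, if a homomorphism from `Λ₀ ⋊ Aₙ` to a group `L` is trivial on the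
alternating group `Aₙ`, then it is trivial on `Λ₀` as well. -/
theorem hom_trivial_on_alternating_trivial_on_lattice (n : ℕ) (hn : 5 ≤ n)
    (L : Type*) [Group L] (φ : LamSemidirect n →* L)
    (hA : ∀ σ : alternatingGroup (Fin n), φ (SemidirectProduct.inr σ) = 1) :
    ∀ v : Multiplicative (sumZero n), φ (SemidirectProduct.inl v) = 1 := by
  set ψ : Multiplicative (sumZero n) →* L := φ.comp SemidirectProduct.inl with hψ
  have hinv : ∀ (σ : alternatingGroup (Fin n)) (x : sumZero n),
      ψ (Multiplicative.ofAdd (permAddAut n σ.1 x)) = ψ (Multiplicative.ofAdd x) := by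
    intro σ x
    have h1 : (SemidirectProduct.inl (φ := altAct n) ((altAct n σ) (Multiplicative.ofAdd x)))
        = SemidirectProduct.inr σ * SemidirectProduct.inl (Multiplicative.ofAdd x)
          * (SemidirectProduct.inr σ)⁻¹ := SemidirectProduct.inl_aut σ _
    have h2 : (altAct n σ) (Multiplicative.ofAdd x)
        = Multiplicative.ofAdd (permAddAut n σ.1 x) := rfl
    calc ψ (Multiplicative.ofAdd (permAddAut n σ.1 x))
        = φ (SemidirectProduct.inl ((altAct n σ) (Multiplicative.ofAdd x))) := by rw [h2]; rfl
      _ = φ (SemidirectProduct.inr σ) * ψ (Multiplicative.ofAdd x)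
            * (φ (SemidirectProduct.inr σ))⁻¹ := by rw [h1]; simp [hψ]
      _ = ψ (Multiplicative.ofAdd x) := by rw [hA]; group
  -- ψ is constant on difference vectors
  have hconst : ∀ i j k l : Fin n, i ≠ j → k ≠ l →
      ψ (Multiplicative.ofAdd (eij n i j)) = ψ (Multiplicative.ofAdd (eij n k l)) := by
    intro i j k l hij hkl
    obtain ⟨σ, hσ, hik, hjl⟩ := exists_even_perm n hn i j k l hij hkl
    rw [← perm_eij n σ i j k l hik hjl]
    exact (hinv ⟨σ, hσ⟩ (eij n i j)).symm
  -- difference vectors map to 1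
  have h5 : (5 : ℕ) ≤ n := hn
  have z0 : Fin n := ⟨0, by omega⟩
  have hone : ∀ i j : Fin n, ψ (Multiplicative.ofAdd (eij n i j)) = 1 := by
    intro i j
    by_cases hij : i = j
    · subst hij
      have : eij n i i = 0 := by apply Subtype.ext; show _ - _ = (0 : Fin n → ℤ); simp
      rw [this]
      simp
    · set i0 : Fin n := ⟨0, by omega⟩
      set i1 : Fin n := ⟨1, by omega⟩
      set i2 : Fin n := ⟨2, by omega⟩
      have h01 : i0 ≠ i1 := by simp [i0, i1, Fin.ext_iff]
      have h12 : i1 ≠ i2 := by simp [i1, i2, Fin.ext_iff]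
      have h02 : i0 ≠ i2 := by simp [i0, i2, Fin.ext_iff]
      set g := ψ (Multiplicative.ofAdd (eij n i0 i1)) with hg
      have key : g * g = g := by
        calc g * g
            = ψ (Multiplicative.ofAdd (eij n i0 i1)) * ψ (Multiplicative.ofAdd (eij n i1 i2)) := by
              rw [← hconst i0 i1 i1 i2 h01 h12]
          _ = ψ (Multiplicative.ofAdd (eij n i0 i1 + eij n i1 i2)) := by
              rw [ofAdd_add, map_mul]
          _ = ψ (Multiplicative.ofAdd (eij n i0 i2)) := by rw [eij_add]
          _ = g := by rw [hg, hconst i0 i2 i0 i1 h02 h01]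
      have hg1 : g = 1 := by
        have := mul_right_cancel (key.trans (one_mul g).symm)
        exact this
      rw [hconst i j i0 i1 hij h01, ← hg, hg1]
  -- conclude by writing any v as a sum of difference vectors
  intro v
  show ψ v = 1
  have hv : v = Multiplicative.ofAdd (Multiplicative.toAdd v) := rfl
  have hsum : ∀ (s : Finset (Fin n)) (w : Fin n → sumZero n),
      (∀ i, ψ (Multiplicative.ofAdd (w i)) = 1) →
      ψ (Multiplicative.ofAdd (∑ i ∈ s, w i)) = 1 := by
    intro s w hw
    induction s using Finset.induction with
    | empty => simp
    | insert _ _ h ih => rw [Finset.sum_insert h, ofAdd_add, map_mul, hw, ih, one_mul]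
  rw [hv, sum_rep n (by omega) (Multiplicative.toAdd v)]
  apply hsum
  intro i
  rw [ofAdd_zsmul, map_zpow, hone, one_zpow]
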